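/- Let Ω ⊆ ℝ^d (d = 2 or 3) be a bounded open set. There exists a constant C > 0 (depending only on Ω and d) such that for all continuously differentiable vector fields u, v, w : ℝ^d → ℝ^d with compact support contained in Ω, |(u·∇v, w)| ≤ C · ‖Du‖_{L²} · ‖Dv‖_{L²} · ‖Dw‖_{L²}, where ‖Du‖_{L²} := (∫_Ω ‖Du(x)‖_op² dx)^{1/2} and similarly for v, w. -/

import Mathlib

open scoped RealInnerProductSpace ENNReal NNReal
open MeasureTheory Measure



lemma aux_L4 {d : ℕ} (hd : d = 2 ∨ d = 3) (Ω : Set (EuclideanSpace ℝ (Fin d)))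
    (hΩbdd : Bornology.IsBounded Ω)
    (f : EuclideanSpace ℝ (Fin d) → EuclideanSpace ℝ (Fin d))
    (hf : ContDiff ℝ 1 f) (hfs : tsupport f ⊆ Ω) :
    eLpNorm f 4 volume ≤
      (eLpNormLESNormFDerivOfLeConst (EuclideanSpace ℝ (Fin d)) volume Ω (12/7) 4 : ℝ≥0∞)
        * volume Ω ^ (7/12 - 1/2 : ℝ)
        * eLpNorm (fderiv ℝ f) 2 (volume.restrict Ω) := by
  have hfr : Module.finrank ℝ (EuclideanSpace ℝ (Fin d)) = d := by
    simp [finrank_euclideanSpace]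
  have hsupp : f.support ⊆ Ω := (subset_tsupport f).trans hfs
  have hDsupp : Function.support (fderiv ℝ f) ⊆ Ω := (support_fderiv_subset ℝ).trans hfs
  have h1 : eLpNorm f (4 : ℝ≥0) volume ≤
      (eLpNormLESNormFDerivOfLeConst (EuclideanSpace ℝ (Fin d)) volume Ω (12/7) 4 : ℝ≥0∞)
        * eLpNorm (fderiv ℝ f) ((12/7 : ℝ≥0)) volume := by
    refine eLpNorm_le_eLpNorm_fderiv_of_le volume hf hsupp ?_ ?_ ?_ hΩbdd
    · rw [← NNReal.coe_le_coe]; push_cast; norm_num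
    · rw [hfr, ← NNReal.coe_lt_coe]; push_cast; rcases hd with rfl | rfl <;> norm_num
    · rw [hfr]; push_cast; rcases hd with rfl | rfl <;> norm_num
  have h2 : eLpNorm (fderiv ℝ f) ((12/7 : ℝ≥0)) volume
      = eLpNorm (fderiv ℝ f) ((12/7 : ℝ≥0)) (volume.restrict Ω) :=
    (eLpNorm_restrict_eq_of_support_subset (ε := EuclideanSpace ℝ (Fin d) →L[ℝ] EuclideanSpace ℝ (Fin d)) hDsupp).symm
  have h3 : eLpNorm (fderiv ℝ f) ((12/7 : ℝ≥0)) (volume.restrict Ω)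
      ≤ eLpNorm (fderiv ℝ f) 2 (volume.restrict Ω)
        * (volume.restrict Ω) Set.univ ^ (7/12 - 1/2 : ℝ) := by
    have := eLpNorm_le_eLpNorm_mul_rpow_measure_univ (μ := volume.restrict Ω)
      (p := ((12/7 : ℝ≥0) : ℝ≥0∞)) (q := 2)
      (by exact_mod_cast (show (12/7:ℝ≥0) ≤ 2 by rw [← NNReal.coe_le_coe]; push_cast; norm_num))
      ((hf.continuous_fderiv one_ne_zero).aestronglyMeasurable)
    convert this using 3
    norm_num
  calc eLpNorm f 4 volume = eLpNorm f (4 : ℝ≥0) volume := by norm_num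
    _ ≤ _ := h1
    _ = _ := by rw [h2]
    _ ≤ (eLpNormLESNormFDerivOfLeConst (EuclideanSpace ℝ (Fin d)) volume Ω (12/7) 4 : ℝ≥0∞)
        * (eLpNorm (fderiv ℝ f) 2 (volume.restrict Ω)
          * (volume.restrict Ω) Set.univ ^ (7/12 - 1/2 : ℝ)) := by gcongr
    _ = _ := by rw [Measure.restrict_apply_univ]; ring


lemma toReal_eLpNorm_two {α : Type*} {m : MeasurableSpace α} {μ : Measure α} {E : Type*}
    [NormedAddCommGroup E] {f : α → E} (hf : MemLp f 2 μ) :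
    (eLpNorm f 2 μ).toReal = Real.sqrt (∫ x, ‖f x‖ ^ 2 ∂μ) := by
  have h2 : ((2 : ℝ≥0∞)).toReal = (2 : ℝ) := by norm_num
  rw [hf.eLpNorm_eq_integral_rpow_norm two_ne_zero ENNReal.ofNat_ne_top,
    ENNReal.toReal_ofReal (by positivity), h2, Real.sqrt_eq_rpow]
  have : ∀ x, ‖f x‖ ^ (2:ℝ) = ‖f x‖ ^ (2:ℕ) := fun x => by
    rw [← Real.rpow_natCast]; norm_num
  rw [show (∫ a, ‖f a‖ ^ (2:ℝ) ∂μ) = ∫ a, ‖f a‖ ^ (2:ℕ) ∂μ from by simp_rw [this]]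
  norm_num


theorem convective_form_le_grad_L2
    (d : ℕ) (hd : d = 2 ∨ d = 3)
    (Ω : Set (EuclideanSpace ℝ (Fin d)))
    (hΩopen : IsOpen Ω) (hΩbdd : Bornology.IsBounded Ω) :
    ∃ C : ℝ, 0 < C ∧
      ∀ u v w : EuclideanSpace ℝ (Fin d) → EuclideanSpace ℝ (Fin d),
        ContDiff ℝ 1 u → ContDiff ℝ 1 v → ContDiff ℝ 1 w →
        HasCompactSupport u → HasCompactSupport v → HasCompactSupport w →
        tsupport u ⊆ Ω → tsupport v ⊆ Ω → tsupport w ⊆ Ω →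
        |∫ x in Ω, ⟪(fderiv ℝ v x) (u x), w x⟫|
          ≤ C * Real.sqrt (∫ x in Ω, ‖fderiv ℝ u x‖ ^ 2)
              * Real.sqrt (∫ x in Ω, ‖fderiv ℝ v x‖ ^ 2)
              * Real.sqrt (∫ x in Ω, ‖fderiv ℝ w x‖ ^ 2) := by
  classical
  set K : ℝ≥0∞ :=
    (eLpNormLESNormFDerivOfLeConst (EuclideanSpace ℝ (Fin d)) volume Ω (12/7) 4 : ℝ≥0∞)
      * volume Ω ^ (7/12 - 1/2 : ℝ) with hK
  have hKne : K ≠ ∞ := by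
    apply ENNReal.mul_ne_top ENNReal.coe_ne_top
    exact ENNReal.rpow_ne_top_of_nonneg (by norm_num) hΩbdd.measure_lt_top.ne
  refine ⟨(K * K).toReal + 1, by positivity, ?_⟩
  intro u v w hu hv hw hcu hcv hcw hsu hsv hsw
  set μ := volume.restrict Ω with hμ
  -- Memℒp facts for the derivatives
  have memD : ∀ (f : EuclideanSpace ℝ (Fin d) → EuclideanSpace ℝ (Fin d)),
      ContDiff ℝ 1 f → HasCompactSupport f → MemLp (fderiv ℝ f) 2 μ := fun f hf hcf =>
    ((hf.continuous_fderiv one_ne_zero).memLp_of_hasCompactSupport (hcf.fderiv (𝕜 := ℝ))).restrict Ω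
  have hNu := memD u hu hcu
  have hNv := memD v hv hcv
  have hNw := memD w hw hcw
  set Nu := eLpNorm (fderiv ℝ u) 2 μ
  set Nv := eLpNorm (fderiv ℝ v) 2 μ
  set Nw := eLpNorm (fderiv ℝ w) 2 μ
  set h : EuclideanSpace ℝ (Fin d) → ℝ := fun x => ⟪(fderiv ℝ v x) (u x), w x⟫ with hh
  have hhc : Continuous h := by
    apply Continuous.inner
    · exact (hv.continuous_fderiv one_ne_zero).clm_apply hu.continuous
    · exact hw.continuous
  -- Step 0 : pointwise bound and monotonicity
  have step0 : eLpNorm h 1 μ ≤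
      eLpNorm (fun x => ‖fderiv ℝ v x‖ * (‖u x‖ * ‖w x‖)) 1 μ := by
    apply eLpNorm_mono
    intro x
    have h1 : ‖h x‖ ≤ ‖(fderiv ℝ v x) (u x)‖ * ‖w x‖ := norm_inner_le_norm _ _
    have h2 : ‖(fderiv ℝ v x) (u x)‖ ≤ ‖fderiv ℝ v x‖ * ‖u x‖ :=
      (fderiv ℝ v x).le_opNorm _
    have h3 : ‖fderiv ℝ v x‖ * (‖u x‖ * ‖w x‖)
        ≤ ‖(fun x => ‖fderiv ℝ v x‖ * (‖u x‖ * ‖w x‖)) x‖ := le_abs_self _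
    calc ‖h x‖ ≤ ‖(fderiv ℝ v x) (u x)‖ * ‖w x‖ := h1
      _ ≤ ‖fderiv ℝ v x‖ * ‖u x‖ * ‖w x‖ := by
          apply mul_le_mul_of_nonneg_right h2 (norm_nonneg _)
      _ = ‖fderiv ℝ v x‖ * (‖u x‖ * ‖w x‖) := by ring
      _ ≤ _ := h3
  -- Step 1 : Hölder 2-2
  have step1 : eLpNorm (fun x => ‖fderiv ℝ v x‖ * (‖u x‖ * ‖w x‖)) 1 μ ≤
      Nv * eLpNorm (fun x => ‖u x‖ * ‖w x‖) 2 μ := by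
    refine (eLpNorm_le_eLpNorm_mul_eLpNorm_of_nnnorm (p := 2) (q := 2) (r := 1)
      (hpqr := ⟨by rw [ENNReal.inv_two_add_inv_two, inv_one]⟩)
      (hv.continuous_fderiv one_ne_zero).aestronglyMeasurable
      ((hu.continuous.norm.mul hw.continuous.norm)).aestronglyMeasurable
      (fun A t => ‖A‖ * t) 1 (Filter.Eventually.of_forall fun x => ?_)).trans
      (le_of_eq (by rw [ENNReal.coe_one, one_mul]; rfl))
    · exact le_of_eq (by rw [one_mul, nnnorm_mul, nnnorm_norm])
  -- Step 2 : Hölder 4-4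
  have step2 : eLpNorm (fun x => ‖u x‖ * ‖w x‖) 2 μ ≤
      eLpNorm u 4 μ * eLpNorm w 4 μ := by
    refine (eLpNorm_le_eLpNorm_mul_eLpNorm_of_nnnorm (p := 4) (q := 4) (r := 2)
      (hpqr := ⟨by
        rw [show (4 : ℝ≥0∞) = 2 * 2 by norm_num, ENNReal.mul_inv (by simp) (by simp),
          ← add_mul, ENNReal.inv_two_add_inv_two, one_mul]⟩)
      hu.continuous.aestronglyMeasurable hw.continuous.aestronglyMeasurable
      (fun a b => ‖a‖ * ‖b‖) 1 (Filter.Eventually.of_forall fun x => ?_)).trans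
      (le_of_eq (by rw [ENNReal.coe_one, one_mul]))
    · exact le_of_eq (by rw [one_mul, nnnorm_mul, nnnorm_norm, nnnorm_norm])
  -- L⁴ Sobolev bounds
  have sob : ∀ (f : EuclideanSpace ℝ (Fin d) → EuclideanSpace ℝ (Fin d)),
      ContDiff ℝ 1 f → tsupport f ⊆ Ω →
      eLpNorm f 4 μ ≤ K * eLpNorm (fderiv ℝ f) 2 μ := fun f hf hsf => by
    calc eLpNorm f 4 μ ≤ eLpNorm f 4 volume := eLpNorm_mono_measure _ Measure.restrict_le_self
      _ ≤ K * eLpNorm (fderiv ℝ f) 2 μ := aux_L4 hd Ω hΩbdd f hf hsf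
  -- full ℝ≥0∞ estimate
  have main : eLpNorm h 1 μ ≤ K * K * (Nu * Nv * Nw) := by
    calc eLpNorm h 1 μ ≤ Nv * eLpNorm (fun x => ‖u x‖ * ‖w x‖) 2 μ := step0.trans step1
      _ ≤ Nv * (eLpNorm u 4 μ * eLpNorm w 4 μ) := by gcongr
      _ ≤ Nv * ((K * Nu) * (K * Nw)) := by gcongr <;> [exact sob u hu hsu; exact sob w hw hsw]
      _ = K * K * (Nu * Nv * Nw) := by ring
  -- pass to real numbers
  have hRHSne : K * K * (Nu * Nv * Nw) ≠ ∞ := by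
    apply ENNReal.mul_ne_top (ENNReal.mul_ne_top hKne hKne)
    exact ENNReal.mul_ne_top (ENNReal.mul_ne_top hNu.eLpNorm_ne_top hNv.eLpNorm_ne_top)
      hNw.eLpNorm_ne_top
  have habs : |∫ x in Ω, h x| ≤ (eLpNorm h 1 μ).toReal := by
    rw [eLpNorm_one_eq_lintegral_enorm,
      ← integral_norm_eq_lintegral_enorm (hhc.aestronglyMeasurable : AEStronglyMeasurable h μ)]
    rw [← Real.norm_eq_abs]
    exact norm_integral_le_integral_norm h
  have hmono := ENNReal.toReal_mono hRHSne main
  have hexp : (K * K * (Nu * Nv * Nw)).toReal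
      = (K * K).toReal * (Nu.toReal * Nv.toReal * Nw.toReal) := by
    simp [ENNReal.toReal_mul]
  rw [hexp] at hmono
  have hNu' : Nu.toReal = Real.sqrt (∫ x in Ω, ‖fderiv ℝ u x‖ ^ 2) := toReal_eLpNorm_two hNu
  have hNv' : Nv.toReal = Real.sqrt (∫ x in Ω, ‖fderiv ℝ v x‖ ^ 2) := toReal_eLpNorm_two hNv
  have hNw' : Nw.toReal = Real.sqrt (∫ x in Ω, ‖fderiv ℝ w x‖ ^ 2) := toReal_eLpNorm_two hNw
  have hfinal : |∫ x in Ω, h x| ≤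
      (K * K).toReal * (Nu.toReal * Nv.toReal * Nw.toReal) := habs.trans hmono
  rw [hNu', hNv', hNw'] at hfinal
  have h0 : (0:ℝ) ≤ Real.sqrt (∫ x in Ω, ‖fderiv ℝ u x‖ ^ 2) := Real.sqrt_nonneg _
  have h1 : (0:ℝ) ≤ Real.sqrt (∫ x in Ω, ‖fderiv ℝ v x‖ ^ 2) := Real.sqrt_nonneg _
  have h2 : (0:ℝ) ≤ Real.sqrt (∫ x in Ω, ‖fderiv ℝ w x‖ ^ 2) := Real.sqrt_nonneg _
  calc |∫ x in Ω, h x| ≤ _ := hfinal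
    _ ≤ ((K * K).toReal + 1) * Real.sqrt (∫ x in Ω, ‖fderiv ℝ u x‖ ^ 2)
        * Real.sqrt (∫ x in Ω, ‖fderiv ℝ v x‖ ^ 2)
        * Real.sqrt (∫ x in Ω, ‖fderiv ℝ w x‖ ^ 2) := by
      have hK0 : (0:ℝ) ≤ (K * K).toReal := ENNReal.toReal_nonneg
      nlinarith [mul_nonneg (mul_nonneg h0 h1) h2, mul_nonneg h0 h1, mul_nonneg h1 h2]
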